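/- The unsplitting number 𝔯 is greater than or equal to the covering number of the meager ideal of Cantor space: 𝔯 ≥ cov(ℳ), where cov(ℳ) is computed in the space ℕ → Bool with the product topology. -/
import Mathlib


open Cardinal Set

/-- `X` splits `Y`: both `X ∩ Y` and `Y \ X` are infinite. -/
def Splits (X Y : Set ℕ) : Prop := (X ∩ Y).Infinite ∧ (Y \ X).Infinite

/-- The unsplitting (reaping) number 𝔯. -/
noncomputable def unsplitNum : Cardinal :=
  sInf {c : Cardinal | ∃ R : Set (Set ℕ),
    (∀ Y ∈ R, Y.Infinite) ∧ (∀ X : Set ℕ, ∃ Y ∈ R, ¬ Splits X Y) ∧ c = #R}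

/-- The covering number of the meager ideal of a topological space. -/
noncomputable def covMeager (X : Type) [TopologicalSpace X] : Cardinal :=
  sInf {c : Cardinal | ∃ F : Set (Set X),
    (∀ s ∈ F, IsMeagre s) ∧ ⋃₀ F = Set.univ ∧ c = #F}

namespace CovUnsplitAux

/-- The basic open set of functions hitting value `b` on `Y` beyond `N`. -/
def D (Y : Set ℕ) (b : Bool) (N : ℕ) : Set (ℕ → Bool) :=
  {f | ∃ n, n ∈ Y ∧ N ≤ n ∧ f n = b}

lemma isOpen_D (Y : Set ℕ) (b : Bool) (N : ℕ) : IsOpen (D Y b N) := by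
  have : D Y b N = ⋃ n ∈ {n | n ∈ Y ∧ N ≤ n}, {f : ℕ → Bool | f n = b} := by
    ext f
    simp [D, and_assoc]
  rw [this]
  refine isOpen_biUnion fun n _ => ?_
  have : {f : ℕ → Bool | f n = b} = (fun f : ℕ → Bool => f n) ⁻¹' {b} := rfl
  rw [this]
  exact (isOpen_discrete ({b} : Set Bool)).preimage (continuous_apply n)

lemma dense_D (Y : Set ℕ) (hY : Y.Infinite) (b : Bool) (N : ℕ) : Dense (D Y b N) := by
  intro f
  apply mem_closure_iff_seq_limit.mpr
  have hn : ∀ k : ℕ, ∃ n ∈ Y, max N k < n := fun k => hY.exists_gt (max N k)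
  choose n hnY hnk using hn
  refine ⟨fun k => Function.update f (n k) b, ?_, ?_⟩
  · intro k
    exact ⟨n k, hnY k, le_of_lt (lt_of_le_of_lt (le_max_left _ _) (hnk k)),
      Function.update_self _ _ _⟩
  · rw [tendsto_pi_nhds]
    intro i
    apply tendsto_nhds_of_eventually_eq
    filter_upwards [Filter.eventually_gt_atTop i] with k hk
    have : n k ≠ i := by
      have := lt_of_le_of_lt (le_max_right N k) (hnk k)
      omega
    exact Function.update_of_ne (Ne.symm this) b f

lemma infinite_of_unbounded {s : Set ℕ} (h : ∀ N, ∃ n ∈ s, N ≤ n) : s.Infinite := by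
  intro hfin
  obtain ⟨B, hB⟩ := hfin.bddAbove
  obtain ⟨n, hn, hBn⟩ := h (B + 1)
  exact absurd (hB hn) (by omega)

lemma meagre_nonsplit (Y : Set ℕ) (hY : Y.Infinite) :
    IsMeagre {f : ℕ → Bool | ¬ Splits {n | f n = true} Y} := by
  rw [IsMeagre]
  have hres : (⋂ N : ℕ, (D Y true N ∩ D Y false N)) ∈ residual (ℕ → Bool) := by
    refine countable_iInter_mem.mpr fun N => ?_
    exact Filter.inter_mem
      (residual_of_dense_open (isOpen_D Y true N) (dense_D Y hY true N))
      (residual_of_dense_open (isOpen_D Y false N) (dense_D Y hY false N))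
  refine Filter.mem_of_superset hres ?_
  intro f hf
  simp only [mem_iInter, mem_inter_iff] at hf
  simp only [mem_compl_iff, mem_setOf_eq, not_not]
  constructor
  · apply infinite_of_unbounded
    intro N
    obtain ⟨n, hnY, hNn, hfn⟩ := (hf N).1
    exact ⟨n, ⟨hfn, hnY⟩, hNn⟩
  · apply infinite_of_unbounded
    intro N
    obtain ⟨n, hnY, hNn, hfn⟩ := (hf N).2
    exact ⟨n, ⟨hnY, by simp [hfn]⟩, hNn⟩

end CovUnsplitAux

theorem covMeager_le_unsplitNum : covMeager (ℕ → Bool) ≤ unsplitNum := by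
  apply le_csInf
  · refine ⟨#{Y : Set ℕ | Y.Infinite}, {Y | Y.Infinite}, fun Y hY => hY, ?_, rfl⟩
    intro X
    by_cases hX : X.Infinite
    · exact ⟨X, hX, fun h => by simpa using h.2⟩
    · refine ⟨{n | True}, Set.infinite_univ.mono (by simp), fun h => ?_⟩
      exact hX (h.1.mono (Set.inter_subset_left))
  · rintro c ⟨R, hR1, hR2, rfl⟩
    set F : Set (Set (ℕ → Bool)) :=
      (fun Y => {f : ℕ → Bool | ¬ Splits {n | f n = true} Y}) '' R with hF
    have hmem : #F ∈ {c : Cardinal | ∃ F : Set (Set (ℕ → Bool)),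
        (∀ s ∈ F, IsMeagre s) ∧ ⋃₀ F = Set.univ ∧ c = #F} := by
      refine ⟨F, ?_, ?_, rfl⟩
      · rintro s ⟨Y, hYR, rfl⟩
        exact CovUnsplitAux.meagre_nonsplit Y (hR1 Y hYR)
      · apply Set.eq_univ_of_forall
        intro f
        obtain ⟨Y, hYR, hns⟩ := hR2 {n | f n = true}
        exact ⟨_, ⟨Y, hYR, rfl⟩, hns⟩
    calc covMeager (ℕ → Bool) ≤ #F := csInf_le' hmem
      _ ≤ #R := Cardinal.mk_image_le
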